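/- Let n ≥ 1 and let A, B be n×n real matrices with A invertible such that A⁻¹B is a symmetric matrix. Then the univariate polynomial p(t) = det(A + t·B) has degree exactly rank(B). -/
import Mathlib


open Polynomial

/-- For `n ≥ 1` and real `n×n` matrices `A, B` with `A` invertible and
`A⁻¹B` symmetric, the univariate polynomial `p(t) = det(A + t B)` has degree exactly
`rank B`. -/
theorem stmt1 (n : ℕ) (hn : 1 ≤ n) (A B : Matrix (Fin n) (Fin n) ℝ)
    (hA : IsUnit A.det) (hsymm : (A⁻¹ * B).IsSymm) :
    ((A.map C + (X : ℝ[X]) • B.map C).det).degree = (B.rank : ℕ) := by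
  classical
  set M := A⁻¹ * B with hMdef
  have hMherm : M.IsHermitian := by
    rw [Matrix.IsHermitian, Matrix.conjTranspose_eq_transpose_of_trivial]
    exact hsymm
  have hB : A * M = B := by
    rw [hMdef, ← mul_assoc, Matrix.mul_nonsing_inv A hA, one_mul]
  set ev := hMherm.eigenvalues with hev
  set U : Matrix (Fin n) (Fin n) ℝ := ↑(hMherm.eigenvectorUnitary) with hU
  have hUstar : U * star U = 1 :=
    (Matrix.mem_unitaryGroup_iff).mp (hMherm.eigenvectorUnitary).2
  have hspec : M = U * Matrix.diagonal ev * star U := by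
    have := hMherm.spectral_theorem
    simpa [RCLike.ofReal_real_eq_id] using this
  -- polynomial factorization
  have key : A.map C + (X : ℝ[X]) • B.map C
      = A.map C * ((1 : Matrix (Fin n) (Fin n) ℝ[X]) + (X : ℝ[X]) • M.map C) := by
    rw [mul_add, mul_one, Matrix.mul_smul, ← Matrix.map_mul, hB]
  have key2 : (1 : Matrix (Fin n) (Fin n) ℝ[X]) + (X : ℝ[X]) • M.map C
      = U.map C * ((1 : Matrix (Fin n) (Fin n) ℝ[X])
          + (X : ℝ[X]) • (Matrix.diagonal ev).map C) * (star U).map C := by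
    rw [mul_add, add_mul, mul_one, ← Matrix.map_mul, hUstar,
      Matrix.map_one C (map_zero C) (map_one C), Matrix.mul_smul, Matrix.smul_mul,
      ← Matrix.map_mul, ← Matrix.map_mul, ← hspec]
  have hdet2 : ((1 : Matrix (Fin n) (Fin n) ℝ[X]) + (X : ℝ[X]) • M.map C).det
      = ((1 : Matrix (Fin n) (Fin n) ℝ[X])
          + (X : ℝ[X]) • (Matrix.diagonal ev).map C).det := by
    rw [key2, Matrix.det_mul, Matrix.det_mul, mul_right_comm, ← Matrix.det_mul,
      ← Matrix.map_mul, hUstar, Matrix.map_one C (map_zero C) (map_one C),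
      Matrix.det_one, one_mul]
  have hdiag : ((1 : Matrix (Fin n) (Fin n) ℝ[X])
      + (X : ℝ[X]) • (Matrix.diagonal ev).map C).det = ∏ i, (1 + C (ev i) * X) := by
    rw [Matrix.diagonal_map (map_zero C), ← Matrix.diagonal_smul, ← Matrix.diagonal_one,
      Matrix.diagonal_add, Matrix.det_diagonal]
    exact Finset.prod_congr rfl fun i _ => by rw [Pi.smul_apply, smul_eq_mul, mul_comm]
  have hdeg : (∏ i, (1 + C (ev i) * X)).degree
      = (((Finset.univ.filter fun i => ev i ≠ 0).card : ℕ) : WithBot ℕ) := by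
    rw [Polynomial.degree_prod]
    have h : ∀ i : Fin n, (1 + C (ev i) * X).degree
        = (((if ev i ≠ 0 then 1 else 0 : ℕ)) : WithBot ℕ) := by
      intro i
      by_cases h : ev i = 0
      · simp [h]
      · rw [if_pos h, add_comm, ← Polynomial.C_1, Polynomial.degree_linear h]
        rfl
    simp_rw [h, ← Nat.cast_sum]
    norm_cast
    simp [Finset.sum_ite]
  have hrank : B.rank = (Finset.univ.filter fun i => ev i ≠ 0).card := by
    rw [← hB, Matrix.rank_mul_eq_right_of_isUnit_det A M hA,
      hMherm.rank_eq_card_non_zero_eigs, Fintype.card_subtype]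
  rw [key, Matrix.det_mul,
    show (A.map (⇑C)).det = C A.det from (RingHom.map_det (C : ℝ →+* ℝ[X]) A).symm,
    hdet2, hdiag, Polynomial.degree_C_mul hA.ne_zero, hdeg, hrank]
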